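/- arXiv:2003.03208 — 3 statements merged into one kernel-verified Lean document; each statement's English description precedes it below -/
import Mathlib

section
/- Define a₁ = 1 and, for integers k ≥ 2, a_k = (1/2)·√( √(9^{k+1} − 34·3^k + 25) − 3^k + 5 ). Then a₂ = √(2√7 − 1), the sequence (a_k) is strictly increasing, and for every k ≥ 2 the ratio satisfies √3 < a_{k+1}/a_k ≤ √((√1417 − 11)/(4√7 − 2)), with equality on the right only at k = 2; moreover a_{k+1}/a_k is monotonically decreasing in k for k ≥ 2. -/
/-- The limiting normalized frequencies at the Euler–Moulton relative equilibrium: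
`a 1 = 1` and `a k = (1/2)√(√(9^{k+1} - 34·3^k + 25) - 3^k + 5)` for `k ≥ 2`. -/
noncomputable def aseq (k : ℕ) : ℝ :=
  if k ≤ 1 then 1
  else (1 / 2) * Real.sqrt
    (Real.sqrt ((9 : ℝ) ^ (k + 1) - 34 * 3 ^ k + 25) - 3 ^ k + 5)

noncomputable def fR (t : ℝ) : ℝ := Real.sqrt (9*t^2 - 34*t + 25) - t + 5

lemma fR_arg_nonneg {t : ℝ} (ht : 9 ≤ t) : 0 ≤ 9*t^2 - 34*t + 25 := by nlinarith

/-- upper bound (multiplied by t) -/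
lemma fR_ub {t : ℝ} (ht : 9 ≤ t) : t * fR t < 2*t^2 - (2/3)*t - 32/27 := by
  have ht0 : (0:ℝ) < t := by linarith
  have hb : 0 < 3*t - 17/3 - (32/27)/t := by
    rw [sub_pos, div_lt_iff₀ ht0]; nlinarith
  have h : Real.sqrt (9*t^2 - 34*t + 25) < 3*t - 17/3 - (32/27)/t := by
    rw [Real.sqrt_lt' hb]
    have : ((32:ℝ)/27)/t > 0 := by positivity
    have h2 : (3*t - 17/3 - (32/27)/t)^2
        = 9*t^2 - 34*t + 289/9 - 6*(32/27) + (34/3)*((32/27)/t) + ((32/27)/t)^2 := by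
      field_simp; ring
    nlinarith [sq_nonneg ((32/27)/t)]
  have h3 : t * fR t < t * (3*t - 17/3 - (32/27)/t - t + 5) := by
    unfold fR
    apply mul_lt_mul_of_pos_left _ ht0
    linarith
  calc t * fR t < t * (3*t - 17/3 - (32/27)/t - t + 5) := h3
    _ = 2*t^2 - (2/3)*t - 32/27 := by field_simp; ring

/-- lower bound (multiplied by t) -/
lemma fR_lb {t : ℝ} (ht : 9 ≤ t) : 2*t^2 - (2/3)*t - 8/5 ≤ t * fR t := by
  have ht0 : (0:ℝ) < t := by linarith
  have hy : 0 ≤ 3*t - 17/3 - (8/5)/t := by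
    rw [sub_nonneg, div_le_iff₀ ht0]; nlinarith
  have h : 3*t - 17/3 - (8/5)/t ≤ Real.sqrt (9*t^2 - 34*t + 25) := by
    rw [Real.le_sqrt hy (fR_arg_nonneg ht)]
    have h2 : (3*t - 17/3 - (8/5)/t)^2
        = 9*t^2 - 34*t + 289/9 - 6*(8/5) + (34/3)*((8/5)/t) + ((8/5)/t)^2 := by
      field_simp; ring
    have h3 : ((8:ℝ)/5)/t ≤ (8/5)/9 := by
      apply div_le_div_of_nonneg_left (by norm_num) (by norm_num) ht
    have h4 : (0:ℝ) < (8/5)/t := by positivity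
    nlinarith
  have h3 : t * (3*t - 17/3 - (8/5)/t - t + 5) ≤ t * fR t := by
    unfold fR
    apply mul_le_mul_of_nonneg_left _ (le_of_lt ht0)
    linarith
  calc 2*t^2 - (2/3)*t - 8/5 = t * (3*t - 17/3 - (8/5)/t - t + 5) := by field_simp; ring
    _ ≤ t * fR t := h3

lemma fR_pos {t : ℝ} (ht : 9 ≤ t) : 0 < fR t := by
  have ht0 : (0:ℝ) < t := by linarith
  have := fR_lb ht
  nlinarith

/-- key inequality A : f(3t) > 3 f(t) -/
lemma keyA {t : ℝ} (ht : 9 ≤ t) : 3 * fR t < fR (3*t) := by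
  have ht0 : (0:ℝ) < t := by linarith
  have h1 := fR_ub ht
  have h2 := fR_lb (show (9:ℝ) ≤ 3*t by linarith)
  have h3 : 3*t * (3 * fR t) < 3*t * fR (3*t) := by nlinarith
  exact lt_of_mul_lt_mul_left h3 (by linarith)

/-- key inequality B : f(9t) f(t) < f(3t)^2 -/
lemma keyB {t : ℝ} (ht : 9 ≤ t) : fR (9*t) * fR t < (fR (3*t))^2 := by
  have ht0 : (0:ℝ) < t := by linarith
  have h1 := fR_ub ht
  have h2 := fR_ub (show (9:ℝ) ≤ 9*t by linarith)
  have h3 := fR_lb (show (9:ℝ) ≤ 3*t by linarith)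
  have p1 := fR_pos ht
  have p2 := fR_pos (show (9:ℝ) ≤ 9*t by linarith)
  have p3 := fR_pos (show (9:ℝ) ≤ 3*t by linarith)
  have hu2 : 9*t * fR (9*t) < 162*t^2 - 6*t - 32/27 := by nlinarith
  have hu3 : 18*t^2 - 2*t - 8/5 ≤ 3*t * fR (3*t) := by nlinarith
  have hlb0 : (0:ℝ) < 18*t^2 - 2*t - 8/5 := by nlinarith
  have key : (162*t^2 - 6*t - 32/27) * (2*t^2 - (2/3)*t - 32/27)
      < (18*t^2 - 2*t - 8/5)^2 := by nlinarith [sq_nonneg t, mul_pos ht0 ht0]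
  have hmul : (9*t*fR (9*t)) * (t * fR t) < (3*t*fR (3*t))^2 := by
    calc (9*t*fR (9*t)) * (t * fR t)
        < (162*t^2 - 6*t - 32/27) * (2*t^2 - (2/3)*t - 32/27) := by
          apply mul_lt_mul' (le_of_lt hu2) h1 (by positivity) (by nlinarith)
      _ < (18*t^2 - 2*t - 8/5)^2 := key
      _ ≤ (3*t*fR (3*t))^2 := by nlinarith
  nlinarith [hmul, sq_nonneg (fR (3*t))]

lemma aseq_eq {k : ℕ} (hk : 2 ≤ k) : aseq k = Real.sqrt (fR ((3:ℝ)^k)) / 2 := by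
  have hk1 : ¬ k ≤ 1 := by omega
  have h9 : (9:ℝ)^(k+1) = 9 * ((3:ℝ)^k)^2 := by
    rw [show (9:ℝ) = 3^2 by norm_num, ← pow_mul, ← pow_mul, ← pow_add]
    congr 1; omega
  rw [aseq, if_neg hk1, fR, h9]; ring

lemma pow_ge {k : ℕ} (hk : 2 ≤ k) : (9:ℝ) ≤ 3^k := by
  calc (9:ℝ) = 3^2 := by norm_num
    _ ≤ 3^k := by
      apply pow_le_pow_right₀ (by norm_num) hk

lemma aseq_pos {k : ℕ} (hk : 1 ≤ k) : 0 < aseq k := by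
  rcases eq_or_lt_of_le hk with h | h
  · rw [aseq, if_pos (by omega)]; norm_num
  · rw [aseq_eq (by omega)]
    have := fR_pos (pow_ge (show 2 ≤ k by omega))
    positivity

lemma ratio_eq {k : ℕ} (hk : 2 ≤ k) :
    aseq (k+1) / aseq k = Real.sqrt (fR (3 * (3:ℝ)^k)) / Real.sqrt (fR ((3:ℝ)^k)) := by
  rw [aseq_eq hk, aseq_eq (by omega : 2 ≤ k+1), show (3:ℝ)^(k+1) = 3 * 3^k by ring]
  rw [div_div_div_comm]; simp

lemma ratio_gt {k : ℕ} (hk : 2 ≤ k) : Real.sqrt 3 < aseq (k+1) / aseq k := by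
  have ht := pow_ge hk
  have hp := fR_pos ht
  rw [ratio_eq hk, lt_div_iff₀ (Real.sqrt_pos.mpr hp)]
  have h : Real.sqrt (3 * fR ((3:ℝ)^k)) < Real.sqrt (fR (3 * (3:ℝ)^k)) :=
    Real.sqrt_lt_sqrt (by positivity) (keyA ht)
  rwa [Real.sqrt_mul (by norm_num)] at h

lemma ratio_dec {k : ℕ} (hk : 2 ≤ k) :
    aseq (k+2) / aseq (k+1) < aseq (k+1) / aseq k := by
  have ht := pow_ge hk
  have hp1 := fR_pos ht
  have hp3 := fR_pos (show (9:ℝ) ≤ 3 * 3^k by linarith)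
  have hp9 := fR_pos (show (9:ℝ) ≤ 9 * 3^k by linarith)
  have e2 : aseq (k+2) / aseq (k+1)
      = Real.sqrt (fR (9 * (3:ℝ)^k)) / Real.sqrt (fR (3 * (3:ℝ)^k)) := by
    have := ratio_eq (show 2 ≤ k+1 by omega)
    rw [show (3:ℝ)^(k+1) = 3 * 3^k by ring,
      show 3 * (3 * (3:ℝ)^k) = 9 * 3^k by ring] at this
    exact this
  rw [e2, ratio_eq hk, div_lt_div_iff₀ (Real.sqrt_pos.mpr hp3) (Real.sqrt_pos.mpr hp1)]
  have h : Real.sqrt (fR (9 * (3:ℝ)^k) * fR ((3:ℝ)^k))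
      < Real.sqrt ((fR (3 * (3:ℝ)^k))^2) :=
    Real.sqrt_lt_sqrt (by positivity) (keyB ht)
  rw [Real.sqrt_mul (le_of_lt hp9), Real.sqrt_sq (le_of_lt hp3)] at h
  rwa [← Real.mul_self_sqrt (le_of_lt hp3)] at h

lemma sqrt7_ge : (2:ℝ) ≤ Real.sqrt 7 :=
  (Real.le_sqrt (by norm_num) (by norm_num)).mpr (by norm_num)

lemma sqrt1417_ge : (11:ℝ) ≤ Real.sqrt 1417 :=
  (Real.le_sqrt (by norm_num) (by norm_num)).mpr (by norm_num)

lemma fR9 : fR 9 = 8 * Real.sqrt 7 - 4 := by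
  rw [fR, show (9:ℝ)*9^2 - 34*9 + 25 = 8^2*7 by norm_num,
    Real.sqrt_mul (by norm_num), Real.sqrt_sq (by norm_num)]
  ring

lemma fR27 : fR 27 = 2 * Real.sqrt 1417 - 22 := by
  rw [fR, show (9:ℝ)*27^2 - 34*27 + 25 = 2^2*1417 by norm_num,
    Real.sqrt_mul (by norm_num), Real.sqrt_sq (by norm_num)]
  ring

lemma aseq2 : aseq 2 = Real.sqrt (2 * Real.sqrt 7 - 1) := by
  rw [aseq_eq (le_refl 2), show ((3:ℝ)^2) = 9 by norm_num, fR9,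
    show 8 * Real.sqrt 7 - 4 = 4 * (2 * Real.sqrt 7 - 1) by ring,
    Real.sqrt_mul (by norm_num), show Real.sqrt 4 = 2 by
      rw [show (4:ℝ) = 2^2 by norm_num, Real.sqrt_sq (by norm_num)]]
  ring

lemma r2val : aseq 3 / aseq 2
    = Real.sqrt ((Real.sqrt 1417 - 11) / (4 * Real.sqrt 7 - 2)) := by
  have h7 := sqrt7_ge
  have h14 := sqrt1417_ge
  rw [show aseq 3 = aseq (2 + 1) from rfl, ratio_eq (le_refl 2),
    show (3:ℝ) * 3^2 = 27 by norm_num, show ((3:ℝ)^2) = 9 by norm_num, fR9, fR27,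
    ← Real.sqrt_div (by linarith)]
  congr 1
  rw [div_eq_div_iff (by linarith) (by linarith)]
  ring

lemma ratio_le {k : ℕ} (hk : 2 ≤ k) : aseq (k+1) / aseq k ≤ aseq 3 / aseq 2 := by
  induction k, hk using Nat.le_induction with
  | base => exact le_refl _
  | succ n hn ih => exact le_of_lt (lt_of_lt_of_le (ratio_dec hn) ih)

lemma ratio_lt {k : ℕ} (hk : 3 ≤ k) : aseq (k+1) / aseq k < aseq 3 / aseq 2 := by
  induction k, hk using Nat.le_induction with
  | base => exact ratio_dec (le_refl 2)
  | succ n hn ih => exact lt_trans (ratio_dec (by omega)) ih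

/-- `a₂ = √(2√7-1)`, the sequence is strictly increasing, for `k ≥ 2` the ratio
`a_{k+1}/a_k` lies in `(√3, √((√1417-11)/(4√7-2))]` with equality on the right
only at `k = 2`, and the ratio is monotonically decreasing for `k ≥ 2`. -/
theorem stmt14 :
    aseq 2 = Real.sqrt (2 * Real.sqrt 7 - 1) ∧
    (∀ k : ℕ, 1 ≤ k → aseq k < aseq (k + 1)) ∧
    (∀ k : ℕ, 2 ≤ k →
      Real.sqrt 3 < aseq (k + 1) / aseq k ∧
      aseq (k + 1) / aseq k
        ≤ Real.sqrt ((Real.sqrt 1417 - 11) / (4 * Real.sqrt 7 - 2))) ∧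
    (∀ k : ℕ, 2 ≤ k →
      aseq (k + 1) / aseq k
          = Real.sqrt ((Real.sqrt 1417 - 11) / (4 * Real.sqrt 7 - 2)) → k = 2) ∧
    (∀ k : ℕ, 2 ≤ k → aseq (k + 2) / aseq (k + 1) < aseq (k + 1) / aseq k) := by
  have h13 : (1:ℝ) < Real.sqrt 3 := by
    rw [show (1:ℝ) = Real.sqrt 1 from Real.sqrt_one.symm]
    exact Real.sqrt_lt_sqrt (by norm_num) (by norm_num)
  refine ⟨aseq2, ?_, ?_, ?_, fun k hk => ratio_dec hk⟩
  · intro k hk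
    rcases eq_or_lt_of_le hk with h | h
    · rw [← h, aseq2]
      rw [aseq, if_pos (le_refl 1), Real.lt_sqrt (by norm_num)]
      nlinarith [sqrt7_ge]
    · have hk2 : 2 ≤ k := by omega
      have h1 : 1 < aseq (k+1) / aseq k := lt_trans h13 (ratio_gt hk2)
      exact (one_lt_div (aseq_pos hk)).mp h1
  · intro k hk
    exact ⟨ratio_gt hk, le_of_le_of_eq (ratio_le hk) r2val⟩
  · intro k hk heq
    by_contra h
    have h3 : 3 ≤ k := by omega
    have := ratio_lt h3
    rw [r2val] at this
    linarith [heq ▸ this]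
end

section
/- With a₁ = 1 and a_k = (1/2)·√(√(9^{k+1} − 34·3^k + 25) − 3^k + 5) for k ≥ 2, the sequence is nonresonant up to order 4: for every nonzero integer vector (n₁,…,n_m) with Σ|n_i| ≤ 4 (any m), one has Σ_i n_i · a_i ≠ 0. In particular a_{k₂} ≠ 3a_{k₁}; a_{k₃} ≠ a_{k₂} + 2a_{k₁}; a_{k₃} ≠ 2a_{k₂} ± a_{k₁}; and a_{k₄} ≠ a_{k₃} + a_{k₂} + a_{k₁}, for all admissible index tuples with k₁ < k₂ < k₃ < k₄. -/
open scoped BigOperators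

namespace Stmt16Aux

lemma aseq_of_le {k : ℕ} (hk : k ≤ 1) : aseq k = 1 := if_pos hk

lemma aseq_sq {k : ℕ} (hk : 2 ≤ k) :
    0 < aseq k ∧ 2 * 3 ^ k - 1 < (2 * aseq k) ^ 2 ∧ (2 * aseq k) ^ 2 < 2 * 3 ^ k - 2/3 := by
  have hk1 : ¬ k ≤ 1 := by omega
  rw [aseq, if_neg hk1]
  set x : ℝ := 3 ^ k with hx
  have hx9 : (9:ℝ) ≤ x := by
    rw [hx, show (9:ℝ) = 3 ^ 2 by norm_num]
    exact pow_le_pow_right₀ (by norm_num) hk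
  have h9 : (9:ℝ) ^ (k+1) = 9 * (x * x) := by
    rw [hx, show (9:ℝ) = 3 * 3 by norm_num, mul_pow, pow_succ]
    ring
  have hE : (9:ℝ) ^ (k+1) - 34 * 3 ^ k + 25 = 9 * x^2 - 34 * x + 25 := by
    rw [h9, ← hx]; ring
  rw [hE]
  have hEpos : (0:ℝ) ≤ 9 * x^2 - 34 * x + 25 := by nlinarith
  have hinlo : 3 * x - 6 < Real.sqrt (9 * x^2 - 34 * x + 25) :=
    (Real.lt_sqrt (by nlinarith)).mpr (by nlinarith)
  have hinhi : Real.sqrt (9 * x^2 - 34 * x + 25) < 3 * x - 17/3 :=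
    (Real.sqrt_lt' (by nlinarith)).mpr (by nlinarith)
  set u : ℝ := Real.sqrt (9 * x^2 - 34 * x + 25) - x + 5 with hu
  have hulo : 2 * x - 1 < u := by rw [hu]; linarith
  have huhi : u < 2 * x - 2/3 := by rw [hu]; linarith
  have hupos : (0:ℝ) ≤ u := by linarith
  have hsq : (2 * (1/2 * Real.sqrt u)) ^ 2 = u := by
    rw [show (2 * (1/2 * Real.sqrt u)) = Real.sqrt u by ring]
    exact Real.sq_sqrt hupos
  refine ⟨by nlinarith [Real.sqrt_pos.mpr (show (0:ℝ) < u by linarith)], ?_, ?_⟩ <;> rw [hsq] <;> linarith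

lemma aseq_pos (k : ℕ) : 0 < aseq k := by
  rcases le_or_gt k 1 with h | h
  · rw [aseq_of_le h]; norm_num
  · exact (aseq_sq h).1

/-- `cc j = √(2·3^j)`, the limit profile of `2 * aseq j`. -/
noncomputable def cc (j : ℕ) : ℝ := Real.sqrt (2 * 3 ^ j)

lemma cc_pos (j : ℕ) : 0 < cc j := Real.sqrt_pos.mpr (by positivity)

lemma cc_sq (j : ℕ) : cc j ^ 2 = 2 * 3 ^ j := Real.sq_sqrt (by positivity)

lemma cc_mono {i j : ℕ} (h : i ≤ j) : cc i ≤ cc j :=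
  Real.sqrt_le_sqrt (by
    have : (3:ℝ) ^ i ≤ 3 ^ j := pow_le_pow_right₀ (by norm_num) h
    linarith)

lemma cc_succ (j : ℕ) : cc (j + 1) = Real.sqrt 3 * cc j := by
  rw [cc, cc, show (2:ℝ) * 3 ^ (j+1) = 3 * (2 * 3 ^ j) by ring,
    Real.sqrt_mul (by norm_num)]

lemma cc_two_step (j : ℕ) : cc (j + 2) = 3 * cc j := by
  rw [show j + 2 = (j+1)+1 by ring, cc_succ, cc_succ, ← mul_assoc,
    Real.mul_self_sqrt (by norm_num)]

lemma sqrt3_lb : (1.7320 : ℝ) < Real.sqrt 3 :=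
  (Real.lt_sqrt (by norm_num)).mpr (by norm_num)

lemma sqrt3_ub : Real.sqrt 3 < (1.7321 : ℝ) :=
  (Real.sqrt_lt' (by norm_num)).mpr (by norm_num)

-- numeric bounds on cc
lemma cc1_lb : (2.4494 : ℝ) < cc 1 := (Real.lt_sqrt (by norm_num)).mpr (by norm_num)
lemma cc1_ub : cc 1 < (2.4495 : ℝ) := (Real.sqrt_lt' (by norm_num)).mpr (by norm_num)
lemma cc2_lb : (4.2426 : ℝ) < cc 2 := (Real.lt_sqrt (by norm_num)).mpr (by norm_num)
lemma cc2_ub : cc 2 < (4.2427 : ℝ) := (Real.sqrt_lt' (by norm_num)).mpr (by norm_num)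
lemma cc3_lb : (7.3484 : ℝ) < cc 3 := (Real.lt_sqrt (by norm_num)).mpr (by norm_num)
lemma cc3_ub : cc 3 < (7.3485 : ℝ) := (Real.sqrt_lt' (by norm_num)).mpr (by norm_num)
lemma cc4_lb : (12.7279 : ℝ) < cc 4 := (Real.lt_sqrt (by norm_num)).mpr (by norm_num)
lemma cc5_lb : (22.0454 : ℝ) < cc 5 := (Real.lt_sqrt (by norm_num)).mpr (by norm_num)

-- gap inequalities with rational coefficients
lemma H1 {i j : ℕ} (h : i < j) : 1.7320 * cc i ≤ cc j := by
  have h1 : cc (i+1) ≤ cc j := cc_mono h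
  rw [cc_succ] at h1
  nlinarith [sqrt3_lb, (cc_pos i).le]

lemma H2 (i : ℕ) : cc (i+1) ≤ 1.7321 * cc i := by
  rw [cc_succ]
  nlinarith [sqrt3_ub, (cc_pos i).le]

lemma H3 {i j : ℕ} (h : i + 2 ≤ j) : 3 * cc i ≤ cc j := by
  rw [← cc_two_step]; exact cc_mono h

lemma H5lb {i j : ℕ} (h : i + 3 ≤ j) : 5.196 * cc i ≤ cc j := by
  have h1 : cc (i+3) ≤ cc j := cc_mono h
  rw [show i+3 = (i+1)+2 by ring, cc_two_step, cc_succ] at h1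
  nlinarith [sqrt3_lb, (cc_pos i).le]

lemma H5ub (i : ℕ) : cc (i+3) ≤ 5.1963 * cc i := by
  rw [show i+3 = (i+1)+2 by ring, cc_two_step, cc_succ]
  nlinarith [sqrt3_ub, (cc_pos i).le]

lemma H6 {i j : ℕ} (h : i + 4 ≤ j) : 9 * cc i ≤ cc j := by
  have h1 : cc (i+4) ≤ cc j := cc_mono h
  rw [show i+4 = (i+2)+2 by ring, cc_two_step, cc_two_step] at h1
  linarith

-- bounds relating 2*aseq and cc
lemma b_ub {k : ℕ} (hk : 1 ≤ k) : 2 * aseq k < cc k := by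
  rcases eq_or_lt_of_le hk with h | h
  · subst h
    rw [aseq_of_le le_rfl]
    linarith [cc1_lb]
  · have h2 : 2 ≤ k := h
    obtain ⟨hp, _, hub⟩ := aseq_sq h2
    nlinarith [cc_sq k, cc_pos k]

lemma b_lb {k : ℕ} (hk : 2 ≤ k) : cc k - 1/8 < 2 * aseq k := by
  obtain ⟨hp, hlb, _⟩ := aseq_sq hk
  have hc : (4.2426:ℝ) < cc k := lt_of_lt_of_le cc2_lb (cc_mono hk)
  nlinarith [cc_sq k]

lemma b_ge_two {k : ℕ} (hk : 1 ≤ k) : 2 ≤ 2 * aseq k := by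
  rcases eq_or_lt_of_le hk with h | h
  · rw [aseq_of_le (by omega : k ≤ 1)]; norm_num
  · obtain ⟨hp, hlb, _⟩ := aseq_sq h
    have : (18:ℝ) ≤ 2 * 3 ^ k := by
      have : (3:ℝ)^2 ≤ 3^k := pow_le_pow_right₀ (by norm_num) h
      nlinarith
    nlinarith

lemma aseq_lt {i j : ℕ} (hi : 1 ≤ i) (hij : i < j) : aseq i < aseq j := by
  obtain ⟨d, rfl⟩ : ∃ d, j = d + 1 := ⟨j - 1, by omega⟩
  have hd1 : 1 ≤ d := by omega
  have h1 : cc i ≤ cc d := cc_mono (by omega)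
  have h2 : 1.7320 * cc d ≤ cc (d+1) := H1 (by omega)
  have h3 := b_lb (show 2 ≤ d + 1 by omega)
  have h4 := b_ub hi
  have h5 : (2.4494:ℝ) < cc d := lt_of_lt_of_le cc1_lb (cc_mono hd1)
  linarith

lemma pow3_ge {i j : ℕ} (h : i ≤ j) : (3:ℝ) ^ i ≤ 3 ^ j := pow_le_pow_right₀ (by norm_num) h

lemma pow3_nine {k : ℕ} (hk : 2 ≤ k) : (9:ℝ) ≤ 3 ^ k := by
  calc (9:ℝ) = 3 ^ 2 := by norm_num
  _ ≤ 3 ^ k := pow3_ge hk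

/-- `aseq j ≠ 2 * aseq i` for `1 ≤ i < j`. -/
lemma lem2_ne {i j : ℕ} (hi : 1 ≤ i) (hij : i < j) : aseq j ≠ 2 * aseq i := by
  have hj2 : 2 ≤ j := by omega
  obtain ⟨hjp, hjlb, hjub⟩ := aseq_sq hj2
  rcases eq_or_lt_of_le hi with h1 | h1
  · -- i = 1 : aseq j > 2
    subst h1
    rw [aseq_of_le le_rfl]
    have h9 : (9:ℝ) ≤ 3 ^ j := pow3_nine hj2
    have : 2 * 2 < 2 * aseq j := by nlinarith
    intro h; rw [h] at this; linarith
  · obtain ⟨hip, hilb, hiub⟩ := aseq_sq h1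
    have h9i : (9:ℝ) ≤ 3 ^ i := pow3_nine h1
    rcases eq_or_lt_of_le (show i + 1 ≤ j by omega) with h2 | h2
    · -- j = i+1 : aseq j < 2 aseq i
      have h3 : (3:ℝ) ^ j = 3 * 3 ^ i := by rw [← h2, pow_succ]; ring
      have : 2 * aseq j < 2 * (2 * aseq i) := by nlinarith
      intro h; rw [h] at this; linarith
    · -- j ≥ i+2 : aseq j > 2 aseq i
      have h3 : (9:ℝ) * 3 ^ i ≤ 3 ^ j := by
        calc (9:ℝ) * 3 ^ i = 3 ^ (i+2) := by rw [pow_add]; ring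
        _ ≤ 3 ^ j := pow3_ge (by omega)
      have : 2 * (2 * aseq i) < 2 * aseq j := by nlinarith
      intro h; rw [h] at this; linarith

/-- `aseq j ≠ 3 * aseq i` for `1 ≤ i < j`. -/
lemma lem3_ne {i j : ℕ} (hi : 1 ≤ i) (hij : i < j) : aseq j ≠ 3 * aseq i := by
  have hj2 : 2 ≤ j := by omega
  obtain ⟨hjp, hjlb, hjub⟩ := aseq_sq hj2
  rcases eq_or_lt_of_le hi with h1 | h1
  · -- i = 1 : aseq j ≠ 3
    subst h1
    rw [aseq_of_le le_rfl]
    rcases eq_or_lt_of_le hj2 with h2 | h2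
    · -- j = 2 : aseq 2 < 3
      have h3 : (3:ℝ) ^ j = 9 := by rw [← h2]; norm_num
      have : 2 * aseq j < 2 * (3 * 1) := by nlinarith
      intro h; rw [h] at this; linarith
    · -- j ≥ 3 : aseq j > 3
      have h3 : (27:ℝ) ≤ 3 ^ j := by
        calc (27:ℝ) = 3 ^ 3 := by norm_num
        _ ≤ 3 ^ j := pow3_ge (by omega)
      have : 2 * (3 * 1) < 2 * aseq j := by nlinarith
      intro h; rw [h] at this; linarith
  · obtain ⟨hip, hilb, hiub⟩ := aseq_sq h1
    have h9i : (9:ℝ) ≤ 3 ^ i := pow3_nine h1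
    rcases eq_or_lt_of_le (show i + 1 ≤ j by omega) with h2 | h2
    · -- j = i+1 : aseq j < 3 aseq i
      have h3 : (3:ℝ) ^ j = 3 * 3 ^ i := by rw [← h2, pow_succ]; ring
      have : 2 * aseq j < 2 * (3 * aseq i) := by nlinarith
      intro h; rw [h] at this; linarith
    · -- j ≥ i+2 : aseq j > 3 aseq i
      have h3 : (9:ℝ) * 3 ^ i ≤ 3 ^ j := by
        calc (9:ℝ) * 3 ^ i = 3 ^ (i+2) := by rw [pow_add]; ring
        _ ≤ 3 ^ j := pow3_ge (by omega)
      have : 2 * (3 * aseq i) < 2 * aseq j := by nlinarith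
      intro h; rw [h] at this; linarith

/-- `aseq l + aseq k < aseq m` for `1 ≤ k < l < m`. -/
lemma lem4 {k l m : ℕ} (hk : 1 ≤ k) (hkl : k < l) (hlm : l < m) :
    aseq l + aseq k < aseq m := by
  have h1 := b_lb (show 2 ≤ m by omega)
  have h2 := b_ub (show 1 ≤ l by omega)
  have h3 := b_ub hk
  have h4 := H1 hlm
  have h5 := H3 (show k + 2 ≤ m by omega)
  have h6 : (7.3484:ℝ) < cc m := lt_of_lt_of_le cc3_lb (cc_mono (by omega))
  have hck := (cc_pos k).le
  have hcl := (cc_pos l).le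
  linarith

/-- `aseq m + aseq l < aseq n + aseq k` for `1 ≤ k < l < m < n`. -/
lemma lem9 {k l m n : ℕ} (hk : 1 ≤ k) (hkl : k < l) (hlm : l < m) (hmn : m < n) :
    aseq m + aseq l < aseq n + aseq k := by
  have h1 := b_lb (show 2 ≤ n by omega)
  have h2 := b_ub (show 1 ≤ m by omega)
  have h3 := b_ub (show 1 ≤ l by omega)
  have h4 := b_ge_two hk
  have h5 := H1 hmn
  have h6 := H1 hlm
  have hcm := (cc_pos m).le
  have hcl := (cc_pos l).le
  linarith

/-- `aseq m ≠ 2*aseq l + aseq k` for `1 ≤ k < l < m`. -/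
lemma lem5_ne {k l m : ℕ} (hk : 1 ≤ k) (hkl : k < l) (hlm : l < m) :
    aseq m ≠ 2 * aseq l + aseq k := by
  rcases eq_or_lt_of_le (show l + 1 ≤ m by omega) with h | h
  · -- m = l+1 : aseq m < 2 aseq l + aseq k
    apply ne_of_lt
    have h1 := b_ub (show 1 ≤ m by omega)
    have h2 : cc m ≤ 1.7321 * cc l := by rw [← h]; exact H2 l
    have h3 := b_lb (show 2 ≤ l by omega)
    have h4 := b_ge_two hk
    have hcl := (cc_pos l).le
    linarith
  · -- m ≥ l+2 : aseq m > 2 aseq l + aseq k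
    apply ne_of_gt
    have h1 := b_lb (show 2 ≤ m by omega)
    have h2 := H3 (show l + 2 ≤ m by omega)
    have h3 := b_ub (show 1 ≤ l by omega)
    have h4 := b_ub hk
    have h5 := H1 hkl
    have h6 : (4.2426:ℝ) < cc l := lt_of_lt_of_le cc2_lb (cc_mono (by omega))
    have hck := (cc_pos k).le
    linarith

/-- `aseq m ≠ 2*aseq l - aseq k` for `1 ≤ k < l < m`. -/
lemma lem6_ne {k l m : ℕ} (hk : 1 ≤ k) (hkl : k < l) (hlm : l < m) :
    aseq m ≠ 2 * aseq l - aseq k := by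
  rcases eq_or_lt_of_le (show l + 1 ≤ m by omega) with h | h
  · -- m = l + 1
    rcases (show l = k + 1 ∨ l = k + 2 ∨ k + 3 ≤ l by omega) with h2 | h2 | h2
    · -- l = k+1 : gt
      apply ne_of_gt
      have h1 := b_lb (show 2 ≤ m by omega)
      have h3 := H1 hlm
      have h4 := b_ub (show 1 ≤ l by omega)
      rcases eq_or_lt_of_le hk with h5 | h5
      · -- k = 1, l = 2
        have hl2 : l = 2 := by omega
        subst hl2
        have hk1 : k = 1 := by omega
        subst hk1
        rw [aseq_of_le le_rfl]
        have := cc2_ub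
        linarith
      · have h6 := b_lb h5
        have h7 : cc l ≤ 1.7321 * cc k := by rw [h2]; exact H2 k
        have h8 : (4.2426:ℝ) < cc k := lt_of_lt_of_le cc2_lb (cc_mono h5)
        linarith
    · -- l = k+2
      rcases eq_or_lt_of_le hk with h5 | h5
      · -- k = 1, l = 3, m = 4 : specific squares
        apply ne_of_gt
        have hk1 : k = 1 := by omega
        have hl3 : l = 3 := by omega
        have hm4 : m = 4 := by omega
        subst hk1; subst hl3; subst hm4
        rw [aseq_of_le le_rfl]
        obtain ⟨hp4, hlb4, _⟩ := aseq_sq (show 2 ≤ 4 by norm_num)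
        obtain ⟨hp3, _, hub3⟩ := aseq_sq (show 2 ≤ 3 by norm_num)
        have e4 : (2:ℝ) * 3 ^ 4 - 1 = 161 := by norm_num
        have e3 : (2:ℝ) * 3 ^ 3 - 2/3 = 160/3 := by norm_num
        rw [e4] at hlb4; rw [e3] at hub3
        have hb4 : (12.688:ℝ) < 2 * aseq 4 := by nlinarith
        have hb3 : 2 * aseq 3 < (7.303:ℝ) := by nlinarith
        linarith
      · -- k ≥ 2 : gt
        apply ne_of_gt
        have h1 := b_lb (show 2 ≤ m by omega)
        have h3 := H1 hlm
        have h4 := b_ub (show 1 ≤ l by omega)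
        have h6 := b_lb h5
        have h7 : cc l = 3 * cc k := by rw [h2]; exact cc_two_step k
        have h8 : (4.2426:ℝ) < cc k := lt_of_lt_of_le cc2_lb (cc_mono h5)
        linarith
    · -- l ≥ k+3 : lt
      apply ne_of_lt
      have h1 := b_ub (show 1 ≤ m by omega)
      have h2' : cc m ≤ 1.7321 * cc l := by rw [← h]; exact H2 l
      have h3 := b_lb (show 2 ≤ l by omega)
      have h4 := b_ub hk
      have h5 := H5lb h2
      have h6 : (12.7279:ℝ) < cc l := lt_of_lt_of_le cc4_lb (cc_mono (by omega))
      have hck := (cc_pos k).le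
      linarith
  · -- m ≥ l+2 : gt
    apply ne_of_gt
    have h1 := b_lb (show 2 ≤ m by omega)
    have h2 := H3 (show l + 2 ≤ m by omega)
    have h3 := b_ub (show 1 ≤ l by omega)
    have h4 := (aseq_pos k).le
    have h6 : (4.2426:ℝ) < cc l := lt_of_lt_of_le cc2_lb (cc_mono (by omega))
    linarith

/-- `aseq m ≠ aseq l + 2*aseq k` for `1 ≤ k < l < m`. -/
lemma lem7_ne {k l m : ℕ} (hk : 1 ≤ k) (hkl : k < l) (hlm : l < m) :
    aseq m ≠ aseq l + 2 * aseq k := by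
  rcases eq_or_lt_of_le (show l + 1 ≤ m by omega) with h | h
  · rcases eq_or_lt_of_le (show k + 1 ≤ l by omega) with h2 | h2
    · -- m = l+1, l = k+1 : lt
      apply ne_of_lt
      have h1 := b_ub (show 1 ≤ m by omega)
      have h3 : cc m ≤ 1.7321 * cc l := by rw [← h]; exact H2 l
      have h4 := b_lb (show 2 ≤ l by omega)
      rcases eq_or_lt_of_le hk with h5 | h5
      · -- k = 1, l = 2, m = 3
        have hk1 : k = 1 := by omega
        have hl2 : l = 2 := by omega
        subst hk1; subst hl2
        rw [aseq_of_le le_rfl]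
        have := cc2_lb
        have := cc2_ub
        linarith
      · have h6 := b_lb h5
        have h7 : cc l ≤ 1.7321 * cc k := by rw [← h2]; exact H2 k
        have h8 : (7.3484:ℝ) < cc l := lt_of_lt_of_le cc3_lb (cc_mono (by omega))
        linarith
    · -- l ≥ k+2 : gt
      apply ne_of_gt
      have h1 := b_lb (show 2 ≤ m by omega)
      have h3 := H1 hlm
      have h4 := b_ub (show 1 ≤ l by omega)
      have h5 := b_ub hk
      have h6 := H3 (show k + 2 ≤ l by omega)
      have h7 : (7.3484:ℝ) < cc l := lt_of_lt_of_le cc3_lb (cc_mono (by omega))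
      have hck := (cc_pos k).le
      linarith
  · -- m ≥ l+2 : gt
    apply ne_of_gt
    have h1 := b_lb (show 2 ≤ m by omega)
    have h2 := H3 (show l + 2 ≤ m by omega)
    have h3 := b_ub (show 1 ≤ l by omega)
    have h4 := b_ub hk
    have h5 := H1 hkl
    have h6 : (4.2426:ℝ) < cc l := lt_of_lt_of_le cc2_lb (cc_mono (by omega))
    have hck := (cc_pos k).le
    linarith

/-- `aseq n ≠ aseq m + aseq l + aseq k` for `1 ≤ k < l < m < n`. -/
lemma lem8_ne {k l m n : ℕ} (hk : 1 ≤ k) (hkl : k < l) (hlm : l < m) (hmn : m < n) :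
    aseq n ≠ aseq m + aseq l + aseq k := by
  rcases eq_or_lt_of_le (show m + 1 ≤ n by omega) with h | h
  · rcases eq_or_lt_of_le (show l + 1 ≤ m by omega) with h2 | h2
    · -- n = m+1, m = l+1
      rcases (show m = k + 2 ∨ m = k + 3 ∨ k + 4 ≤ m by omega) with h3 | h3 | h3
      · -- m = k+2 : lt
        apply ne_of_lt
        have h4 := b_ub (show 1 ≤ n by omega)
        have h5 : cc n ≤ 1.7321 * cc m := by rw [← h]; exact H2 m
        have h6 := b_lb (show 2 ≤ m by omega)
        have h7 := b_lb (show 2 ≤ l by omega)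
        have h8 : cc m ≤ 1.7321 * cc l := by rw [← h2]; exact H2 l
        rcases eq_or_lt_of_le hk with h9 | h9
        · -- k = 1 : (1,2,3,4)
          have hk1 : k = 1 := by omega
          have hm3 : m = 3 := by omega
          subst hk1
          rw [aseq_of_le le_rfl]
          have h10 : cc m < 7.3485 := by rw [hm3]; exact cc3_ub
          have hclm := (cc_pos l).le
          linarith
        · have h10 := b_lb h9
          have h11 : cc m = 3 * cc k := by rw [h3]; exact cc_two_step k
          have h12 : (12.7279:ℝ) < cc m := lt_of_lt_of_le cc4_lb (cc_mono (by omega))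
          linarith
      · -- m = k+3
        rcases eq_or_lt_of_le hk with h9 | h9
        · -- k = 1 : (1,3,4,5) : gt via squares
          apply ne_of_gt
          have hk1 : k = 1 := by omega
          have hl3 : l = 3 := by omega
          have hm4 : m = 4 := by omega
          have hn5 : n = 5 := by omega
          subst hk1; subst hl3; subst hm4; subst hn5
          rw [aseq_of_le le_rfl]
          obtain ⟨hp5, hlb5, _⟩ := aseq_sq (show 2 ≤ 5 by norm_num)
          obtain ⟨hp4, _, hub4⟩ := aseq_sq (show 2 ≤ 4 by norm_num)
          obtain ⟨hp3, _, hub3⟩ := aseq_sq (show 2 ≤ 3 by norm_num)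
          have e5 : (2:ℝ) * 3 ^ 5 - 1 = 485 := by norm_num
          have e4 : (2:ℝ) * 3 ^ 4 - 2/3 = 484/3 := by norm_num
          have e3 : (2:ℝ) * 3 ^ 3 - 2/3 = 160/3 := by norm_num
          rw [e5] at hlb5; rw [e4] at hub4; rw [e3] at hub3
          have hb5 : (22.0227:ℝ) < 2 * aseq 5 := by nlinarith
          have hb4 : 2 * aseq 4 < (12.7018:ℝ) := by nlinarith
          have hb3 : 2 * aseq 3 < (7.3030:ℝ) := by nlinarith
          linarith
        · -- k ≥ 2 : lt
          apply ne_of_lt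
          have h4 := b_ub (show 1 ≤ n by omega)
          have h5 : cc n ≤ 1.7321 * cc m := by rw [← h]; exact H2 m
          have h6 := b_lb (show 2 ≤ m by omega)
          have h7 := b_lb (show 2 ≤ l by omega)
          have h8 : cc m ≤ 1.7321 * cc l := by rw [← h2]; exact H2 l
          have h10 := b_lb h9
          have h11 : cc m ≤ 5.1963 * cc k := by rw [h3]; exact H5ub k
          have h12 : (22.0454:ℝ) < cc m := lt_of_lt_of_le cc5_lb (cc_mono (by omega))
          have hck := (cc_pos k).le
          linarith
      · -- m ≥ k+4 : gt
        apply ne_of_gt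
        have h4 := b_lb (show 2 ≤ n by omega)
        have h5 := H1 hmn
        have h6 := b_ub (show 1 ≤ m by omega)
        have h7 := b_ub (show 1 ≤ l by omega)
        have h8 := H1 hlm
        have h9 := b_ub hk
        have h10 := H6 h3
        have h11 : (22.0454:ℝ) < cc m := lt_of_lt_of_le cc5_lb (cc_mono (by omega))
        have hcl := (cc_pos l).le
        have hck := (cc_pos k).le
        linarith
    · -- n = m+1, m ≥ l+2 : gt
      apply ne_of_gt
      have h4 := b_lb (show 2 ≤ n by omega)
      have h5 := H1 hmn
      have h6 := b_ub (show 1 ≤ m by omega)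
      have h7 := b_ub (show 1 ≤ l by omega)
      have h8 := H3 (show l + 2 ≤ m by omega)
      have h9 := b_ub hk
      have h10 := H5lb (show k + 3 ≤ m by omega)
      have h11 : (12.7279:ℝ) < cc m := lt_of_lt_of_le cc4_lb (cc_mono (by omega))
      have hcl := (cc_pos l).le
      have hck := (cc_pos k).le
      linarith
  · -- n ≥ m+2 : gt
    apply ne_of_gt
    have h4 := b_lb (show 2 ≤ n by omega)
    have h5 := H3 (show m + 2 ≤ n by omega)
    have h6 := b_ub (show 1 ≤ m by omega)
    have h7 := b_ub (show 1 ≤ l by omega)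
    have h8 := H1 hlm
    have h9 := b_ub hk
    have h10 := H3 (show k + 2 ≤ m by omega)
    have h11 : (7.3484:ℝ) < cc m := lt_of_lt_of_le cc3_lb (cc_mono (by omega))
    have hcl := (cc_pos l).le
    have hck := (cc_pos k).le
    linarith

lemma natAbs_cast_bounds (n : ℤ) : -((n.natAbs : ℝ)) ≤ (n:ℝ) ∧ (n:ℝ) ≤ (n.natAbs : ℝ) := by
  have h : ((n.natAbs : ℝ)) = |(n:ℝ)| := by
    rw [Nat.cast_natAbs, Int.cast_abs]
  rw [h]
  exact ⟨neg_abs_le _, le_abs_self _⟩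

/-- two-index case, positive largest coefficient -/
lemma M2 {k1 k2 : ℕ} (h1 : 1 ≤ k1) (h12 : k1 < k2) (n1 n2 : ℤ)
    (hw : n1.natAbs + n2.natAbs ≤ 4) (hp : 0 < n2) :
    (n1:ℝ) * aseq k1 + n2 * aseq k2 ≠ 0 := by
  have hA := aseq_pos k1
  have hB := aseq_pos k2
  have hAB := aseq_lt h1 h12
  rcases lt_or_ge n2 2 with h2 | h2
  · have hn2 : n2 = 1 := by omega
    subst hn2
    have hb1l : -3 ≤ n1 := by omega
    have hb1u : n1 ≤ 3 := by omega
    have t2 := lem2_ne h1 h12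
    have t3 := lem3_ne h1 h12
    interval_cases n1 <;>
      · push_cast
        intro hh
        first
        | linarith
        | exact t2 (by linarith)
        | exact t3 (by linarith)
  · -- n2 ≥ 2 : sum is positive
    intro hh
    obtain ⟨e1, e1'⟩ := natAbs_cast_bounds n1
    have hw' : (n1.natAbs : ℝ) + (n2.natAbs : ℝ) ≤ 4 := by exact_mod_cast hw
    have hn2abs : (n2:ℝ) ≤ (n2.natAbs : ℝ) := (natAbs_cast_bounds n2).2
    have h2r : (2:ℝ) ≤ (n2:ℝ) := by exact_mod_cast h2
    have b1 : -((n1.natAbs:ℝ)) * aseq k1 ≤ (n1:ℝ) * aseq k1 := by nlinarith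
    have g4 : 0 ≤ (4 - ((n1.natAbs:ℝ) + (n2:ℝ))) * aseq k1 := by
      apply mul_nonneg _ hA.le
      linarith [hn2abs]
    have g5 : 0 ≤ ((n2:ℝ) - 2) * (aseq k2 + aseq k1) := by
      apply mul_nonneg (by linarith) (by linarith)
    have p1nn : (0:ℝ) ≤ (n1.natAbs:ℝ) := by positivity
    nlinarith [mul_nonneg p1nn (sub_nonneg.mpr hAB.le)]

/-- three-index case, positive largest coefficient -/
lemma M3 {k1 k2 k3 : ℕ} (h1 : 1 ≤ k1) (h12 : k1 < k2) (h23 : k2 < k3) (n1 n2 n3 : ℤ)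
    (hw : n1.natAbs + n2.natAbs + n3.natAbs ≤ 4) (hp : 0 < n3) :
    (n1:ℝ) * aseq k1 + n2 * aseq k2 + n3 * aseq k3 ≠ 0 := by
  have hA := aseq_pos k1
  have hB := aseq_pos k2
  have hC := aseq_pos k3
  have hAB := aseq_lt h1 h12
  have hBC := aseq_lt (by omega) h23
  have hAC := hAB.trans hBC
  rcases lt_or_ge n3 2 with h2 | h2
  · have hn3 : n3 = 1 := by omega
    subst hn3
    have hb1l : -3 ≤ n1 := by omega
    have hb1u : n1 ≤ 3 := by omega
    have hb2l : -3 ≤ n2 := by omega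
    have hb2u : n2 ≤ 3 := by omega
    have s1 := lem4 h1 h12 h23
    have t2A := lem2_ne h1 (h12.trans h23)
    have t3A := lem3_ne h1 (h12.trans h23)
    have t2B := lem2_ne (by omega) h23
    have t3B := lem3_ne (by omega) h23
    have u5 := lem5_ne h1 h12 h23
    have u6 := lem6_ne h1 h12 h23
    have u7 := lem7_ne h1 h12 h23
    interval_cases n1 <;> interval_cases n2 <;>
      first
      | (exfalso; omega)
      | (push_cast
         intro hh
         first
         | linarith
         | exact t2A (by linarith)
         | exact t3A (by linarith)
         | exact t2B (by linarith)
         | exact t3B (by linarith)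
         | exact u5 (by linarith)
         | exact u6 (by linarith)
         | exact u7 (by linarith))
  · intro hh
    obtain ⟨e1, e1'⟩ := natAbs_cast_bounds n1
    obtain ⟨e2, e2'⟩ := natAbs_cast_bounds n2
    have hw' : (n1.natAbs : ℝ) + (n2.natAbs : ℝ) + (n3.natAbs : ℝ) ≤ 4 := by exact_mod_cast hw
    have hn3abs : (n3:ℝ) ≤ (n3.natAbs : ℝ) := (natAbs_cast_bounds n3).2
    have h2r : (2:ℝ) ≤ (n3:ℝ) := by exact_mod_cast h2
    have b1 : -((n1.natAbs:ℝ)) * aseq k1 ≤ (n1:ℝ) * aseq k1 := by nlinarith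
    have b2 : -((n2.natAbs:ℝ)) * aseq k2 ≤ (n2:ℝ) * aseq k2 := by nlinarith
    have p1nn : (0:ℝ) ≤ (n1.natAbs:ℝ) := by positivity
    have p2nn : (0:ℝ) ≤ (n2.natAbs:ℝ) := by positivity
    have g1 : 0 ≤ (n1.natAbs:ℝ) * (aseq k2 - aseq k1) := mul_nonneg p1nn (by linarith)
    have g4 : 0 ≤ (4 - ((n1.natAbs:ℝ) + (n2.natAbs:ℝ) + (n3:ℝ))) * aseq k2 := by
      apply mul_nonneg _ hB.le
      linarith [hn3abs]
    have g5 : 0 ≤ ((n3:ℝ) - 2) * (aseq k3 + aseq k2) := by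
      apply mul_nonneg (by linarith) (by linarith)
    nlinarith

set_option maxHeartbeats 4000000 in
/-- four-index case, positive largest coefficient -/
lemma M4 {k1 k2 k3 k4 : ℕ} (h1 : 1 ≤ k1) (h12 : k1 < k2) (h23 : k2 < k3) (h34 : k3 < k4)
    (n1 n2 n3 n4 : ℤ)
    (hw : n1.natAbs + n2.natAbs + n3.natAbs + n4.natAbs ≤ 4) (hp : 0 < n4) :
    (n1:ℝ) * aseq k1 + n2 * aseq k2 + n3 * aseq k3 + n4 * aseq k4 ≠ 0 := by
  have hA := aseq_pos k1
  have hB := aseq_pos k2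
  have hC := aseq_pos k3
  have hD := aseq_pos k4
  have hAB := aseq_lt h1 h12
  have hBC := aseq_lt (by omega) h23
  have hCD := aseq_lt (by omega) h34
  have hAC := hAB.trans hBC
  have hBD := hBC.trans hCD
  have hAD := hAC.trans hCD
  rcases lt_or_ge n4 2 with h2 | h2
  · have hn4 : n4 = 1 := by omega
    subst hn4
    have hb1l : -3 ≤ n1 := by omega
    have hb1u : n1 ≤ 3 := by omega
    have hb2l : -3 ≤ n2 := by omega
    have hb2u : n2 ≤ 3 := by omega
    have hb3l : -3 ≤ n3 := by omega
    have hb3u : n3 ≤ 3 := by omega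
    have s1 := lem4 h1 h12 h23
    have s2 := lem4 h1 h12 (h23.trans h34)
    have s3 := lem4 h1 (h12.trans h23) h34
    have s4 := lem4 (by omega) h23 h34
    have s9 := lem9 h1 h12 h23 h34
    have t2A := lem2_ne h1 (h12.trans (h23.trans h34))
    have t3A := lem3_ne h1 (h12.trans (h23.trans h34))
    have t2B := lem2_ne (by omega) (h23.trans h34)
    have t3B := lem3_ne (by omega) (h23.trans h34)
    have t2C := lem2_ne (by omega) h34
    have t3C := lem3_ne (by omega) h34
    have u5AB := lem5_ne h1 h12 (h23.trans h34)
    have u6AB := lem6_ne h1 h12 (h23.trans h34)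
    have u7AB := lem7_ne h1 h12 (h23.trans h34)
    have u5AC := lem5_ne h1 (h12.trans h23) h34
    have u6AC := lem6_ne h1 (h12.trans h23) h34
    have u7AC := lem7_ne h1 (h12.trans h23) h34
    have u5BC := lem5_ne (by omega) h23 h34
    have u6BC := lem6_ne (by omega) h23 h34
    have u7BC := lem7_ne (by omega) h23 h34
    have u8 := lem8_ne h1 h12 h23 h34
    interval_cases n1 <;> interval_cases n2 <;> interval_cases n3 <;>
      first
      | (exfalso; omega)
      | (push_cast
         intro hh
         first
         | linarith
         | exact t2A (by linarith)
         | exact t3A (by linarith)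
         | exact t2B (by linarith)
         | exact t3B (by linarith)
         | exact t2C (by linarith)
         | exact t3C (by linarith)
         | exact u5AB (by linarith)
         | exact u6AB (by linarith)
         | exact u7AB (by linarith)
         | exact u5AC (by linarith)
         | exact u6AC (by linarith)
         | exact u7AC (by linarith)
         | exact u5BC (by linarith)
         | exact u6BC (by linarith)
         | exact u7BC (by linarith)
         | exact u8 (by linarith))
  · intro hh
    obtain ⟨e1, e1'⟩ := natAbs_cast_bounds n1
    obtain ⟨e2, e2'⟩ := natAbs_cast_bounds n2
    obtain ⟨e3, e3'⟩ := natAbs_cast_bounds n3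
    have hw' : (n1.natAbs : ℝ) + (n2.natAbs : ℝ) + (n3.natAbs : ℝ) + (n4.natAbs : ℝ) ≤ 4 := by
      exact_mod_cast hw
    have hn4abs : (n4:ℝ) ≤ (n4.natAbs : ℝ) := (natAbs_cast_bounds n4).2
    have h2r : (2:ℝ) ≤ (n4:ℝ) := by exact_mod_cast h2
    have b1 : -((n1.natAbs:ℝ)) * aseq k1 ≤ (n1:ℝ) * aseq k1 := by nlinarith
    have b2 : -((n2.natAbs:ℝ)) * aseq k2 ≤ (n2:ℝ) * aseq k2 := by nlinarith
    have b3 : -((n3.natAbs:ℝ)) * aseq k3 ≤ (n3:ℝ) * aseq k3 := by nlinarith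
    have p1nn : (0:ℝ) ≤ (n1.natAbs:ℝ) := by positivity
    have p2nn : (0:ℝ) ≤ (n2.natAbs:ℝ) := by positivity
    have p3nn : (0:ℝ) ≤ (n3.natAbs:ℝ) := by positivity
    have g1 : 0 ≤ (n1.natAbs:ℝ) * (aseq k3 - aseq k1) := mul_nonneg p1nn (by linarith)
    have g2 : 0 ≤ (n2.natAbs:ℝ) * (aseq k3 - aseq k2) := mul_nonneg p2nn (by linarith)
    have g4 : 0 ≤ (4 - ((n1.natAbs:ℝ) + (n2.natAbs:ℝ) + (n3.natAbs:ℝ) + (n4:ℝ))) * aseq k3 := by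
      apply mul_nonneg _ hC.le
      linarith [hn4abs]
    have g5 : 0 ≤ ((n4:ℝ) - 2) * (aseq k4 + aseq k3) := by
      apply mul_nonneg (by linarith) (by linarith)
    nlinarith

lemma sum_natAbs_ge_length (L : List (ℕ × ℤ)) (h : ∀ p ∈ L, p.2 ≠ 0) :
    L.length ≤ (L.map (fun p => p.2.natAbs)).sum := by
  induction L with
  | nil => simp
  | cons a l ih =>
    simp only [List.map_cons, List.sum_cons, List.length_cons]
    have h1 : a.2 ≠ 0 := h a (by simp)
    have h2 : 1 ≤ a.2.natAbs := by omega
    have h3 := ih (fun p hp => h p (by simp [hp]))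
    omega

lemma list_master (L : List (ℕ × ℤ)) (hne : L ≠ [])
    (hpw : L.Pairwise (fun p q => p.1 < q.1))
    (hmem : ∀ p ∈ L, 1 ≤ p.1 ∧ p.2 ≠ 0)
    (hw : (L.map (fun p => p.2.natAbs)).sum ≤ 4) :
    (L.map (fun p => (p.2:ℝ) * aseq p.1)).sum ≠ 0 := by
  match L, hne with
  | [(k1,n1)], _ =>
    obtain ⟨h1, hn1⟩ := hmem (k1,n1) (by simp)
    simp only [List.map_cons, List.map_nil, List.sum_cons, List.sum_nil, add_zero]
    have hA := aseq_pos k1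
    rcases hn1.lt_or_gt with hneg | hpos
    · have h2 : ((n1:ℝ)) < 0 := by exact_mod_cast hneg
      nlinarith
    · have h2 : (0:ℝ) < (n1:ℝ) := by exact_mod_cast hpos
      nlinarith
  | [(k1,n1),(k2,n2)], _ =>
    obtain ⟨h1, hn1⟩ := hmem (k1,n1) (by simp)
    obtain ⟨h2, hn2⟩ := hmem (k2,n2) (by simp)
    have h12 : k1 < k2 := List.rel_of_pairwise_cons hpw (show ((k2,n2) : ℕ × ℤ) ∈ _ by simp)
    simp only [List.map_cons, List.map_nil, List.sum_cons, List.sum_nil, add_zero] at hw ⊢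
    rcases hn2.lt_or_gt with hneg | hpos
    · have H := M2 h1 h12 (-n1) (-n2) (by simp only [Int.natAbs_neg]; omega) (by omega)
      intro h; apply H; push_cast; linarith
    · have H := M2 h1 h12 n1 n2 (by omega) hpos
      intro h; apply H; linarith
  | [(k1,n1),(k2,n2),(k3,n3)], _ =>
    obtain ⟨h1, hn1⟩ := hmem (k1,n1) (by simp)
    obtain ⟨h2, hn2⟩ := hmem (k2,n2) (by simp)
    obtain ⟨h3, hn3⟩ := hmem (k3,n3) (by simp)
    have h12 : k1 < k2 := List.rel_of_pairwise_cons hpw (show ((k2,n2) : ℕ × ℤ) ∈ _ by simp)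
    have h23 : k2 < k3 := List.rel_of_pairwise_cons (List.Pairwise.of_cons hpw)
      (show ((k3,n3) : ℕ × ℤ) ∈ _ by simp)
    simp only [List.map_cons, List.map_nil, List.sum_cons, List.sum_nil, add_zero] at hw ⊢
    rcases hn3.lt_or_gt with hneg | hpos
    · have H := M3 h1 h12 h23 (-n1) (-n2) (-n3) (by simp only [Int.natAbs_neg]; omega) (by omega)
      intro h; apply H; push_cast; linarith
    · have H := M3 h1 h12 h23 n1 n2 n3 (by omega) hpos
      intro h; apply H; linarith
  | [(k1,n1),(k2,n2),(k3,n3),(k4,n4)], _ =>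
    obtain ⟨h1, hn1⟩ := hmem (k1,n1) (by simp)
    obtain ⟨h2, hn2⟩ := hmem (k2,n2) (by simp)
    obtain ⟨h3, hn3⟩ := hmem (k3,n3) (by simp)
    obtain ⟨h4, hn4⟩ := hmem (k4,n4) (by simp)
    have h12 : k1 < k2 := List.rel_of_pairwise_cons hpw (show ((k2,n2) : ℕ × ℤ) ∈ _ by simp)
    have h23 : k2 < k3 := List.rel_of_pairwise_cons (List.Pairwise.of_cons hpw)
      (show ((k3,n3) : ℕ × ℤ) ∈ _ by simp)
    have h34 : k3 < k4 :=
      List.rel_of_pairwise_cons (List.Pairwise.of_cons (List.Pairwise.of_cons hpw))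
      (show ((k4,n4) : ℕ × ℤ) ∈ _ by simp)
    simp only [List.map_cons, List.map_nil, List.sum_cons, List.sum_nil, add_zero] at hw ⊢
    rcases hn4.lt_or_gt with hneg | hpos
    · have H := M4 h1 h12 h23 h34 (-n1) (-n2) (-n3) (-n4)
        (by simp only [Int.natAbs_neg]; omega) (by omega)
      intro h; apply H; push_cast; linarith
    · have H := M4 h1 h12 h23 h34 n1 n2 n3 n4 (by omega) hpos
      intro h; apply H; linarith
  | (p1::p2::p3::p4::p5::rest), _ =>
    exfalso
    have hlen := sum_natAbs_ge_length (p1::p2::p3::p4::p5::rest) (fun p hp => (hmem p hp).2)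
    simp only [List.length_cons] at hlen
    omega

end Stmt16Aux

open Stmt16Aux in
/-- The sequence `(a_k)` is nonresonant up to order 4: no nontrivial integer
combination `∑ n_i a_i` with `∑ |n_i| ≤ 4` vanishes. In particular
`a_{k₂} ≠ 3a_{k₁}`, `a_{k₃} ≠ a_{k₂} + 2a_{k₁}`, `a_{k₃} ≠ 2a_{k₂} ± a_{k₁}`,
and `a_{k₄} ≠ a_{k₃} + a_{k₂} + a_{k₁}`. -/
theorem stmt16 :
    (∀ (M : ℕ) (n : Fin M → ℤ), (¬ ∀ i, n i = 0) →
      (∑ i, (n i).natAbs) ≤ 4 →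
      (∑ i, (n i : ℝ) * aseq (i.1 + 1)) ≠ 0) ∧
    (∀ k1 k2 : ℕ, 1 ≤ k1 → k1 < k2 → aseq k2 ≠ 3 * aseq k1) ∧
    (∀ k1 k2 k3 : ℕ, 1 ≤ k1 → k1 < k2 → k2 < k3 →
      aseq k3 ≠ aseq k2 + 2 * aseq k1 ∧
      aseq k3 ≠ 2 * aseq k2 + aseq k1 ∧
      aseq k3 ≠ 2 * aseq k2 - aseq k1) ∧
    (∀ k1 k2 k3 k4 : ℕ, 1 ≤ k1 → k1 < k2 → k2 < k3 → k3 < k4 →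
      aseq k4 ≠ aseq k3 + aseq k2 + aseq k1) := by
  refine ⟨?_, ?_, ?_, ?_⟩
  · intro M n hne hw
    classical
    set S : Finset (Fin M) := Finset.univ.filter (fun i => n i ≠ 0) with hS
    set L : List (ℕ × ℤ) := (S.sort (· ≤ ·)).map (fun i => (i.1 + 1, n i)) with hL
    have hperm : (S.sort (· ≤ ·)).Perm S.toList := Finset.sort_perm_toList S _
    have e1 : (L.map (fun p => (p.2:ℝ) * aseq p.1)).sum
        = ∑ i ∈ S, (n i : ℝ) * aseq (i.1+1) := by
      rw [hL, List.map_map]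
      have hp := (hperm.map (fun i : Fin M => (n i : ℝ) * aseq (i.1+1))).sum_eq
      rw [show ((fun p : ℕ × ℤ => (p.2:ℝ) * aseq p.1) ∘ fun i : Fin M => (i.1+1, n i))
          = fun i : Fin M => (n i : ℝ) * aseq (i.1+1) from rfl, hp, Finset.sum_map_toList]
    have e2 : (L.map (fun p => p.2.natAbs)).sum = ∑ i ∈ S, (n i).natAbs := by
      rw [hL, List.map_map]
      have hp := (hperm.map (fun i : Fin M => (n i).natAbs)).sum_eq
      rw [show ((fun p : ℕ × ℤ => p.2.natAbs) ∘ fun i : Fin M => (i.1+1, n i))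
          = fun i : Fin M => (n i).natAbs from rfl, hp, Finset.sum_map_toList]
    have hsub : ∑ i ∈ S, (n i : ℝ) * aseq (i.1+1) = ∑ i, (n i : ℝ) * aseq (i.1+1) := by
      apply Finset.sum_filter_of_ne
      intro i _ hne0
      intro h0
      apply hne0
      rw [h0]
      push_cast
      ring
    have hLne : L ≠ [] := by
      push_neg at hne
      obtain ⟨i, hi⟩ := hne
      have hiS : i ∈ S := by simp [hS, hi]
      have : i ∈ S.sort (· ≤ ·) := (Finset.mem_sort _).mpr hiS
      intro hnil
      rw [hL] at hnil
      rcases List.map_eq_nil_iff.mp hnil with h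
      rw [h] at this
      simp at this
    have hpw : L.Pairwise (fun p q => p.1 < q.1) := by
      rw [hL]
      apply List.Pairwise.map
      · intro a b hab
        exact Nat.add_lt_add_right hab 1
      · exact (Finset.sortedLT_sort S).pairwise
    have hmem : ∀ p ∈ L, 1 ≤ p.1 ∧ p.2 ≠ 0 := by
      intro p hp
      rw [hL] at hp
      obtain ⟨i, hi, rfl⟩ := List.mem_map.mp hp
      have hiS : i ∈ S := (Finset.mem_sort _).mp hi
      rw [hS, Finset.mem_filter] at hiS
      exact ⟨by omega, hiS.2⟩
    have hw' : (L.map (fun p => p.2.natAbs)).sum ≤ 4 := by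
      rw [e2]
      exact le_trans (Finset.sum_le_sum_of_subset (Finset.filter_subset _ _)) hw
    intro h0
    exact list_master L hLne hpw hmem hw' (by rw [e1, hsub]; exact h0)
  · intro k1 k2 h1 h12
    exact lem3_ne h1 h12
  · intro k1 k2 k3 h1 h12 h23
    exact ⟨lem7_ne h1 h12 h23, lem5_ne h1 h12 h23, lem6_ne h1 h12 h23⟩
  · intro k1 k2 k3 k4 h1 h12 h23 h34
    exact lem8_ne h1 h12 h23 h34
end

section
/- Let B be the Hessian of the planar Newtonian potential at a collinear central configuration r = (ξ₁,0,…,ξ_N,0) with multiplier λ. Then each 2×2 off-diagonal block of B equals (m_j m_k / r_{jk}³)·diag(−2, 1). Consequently, if v ∈ ℝ^N is an eigenvector of the collinear operator λ·I_N + M_1^{-1}·B_1 (the one-dimensional problem, M_1 = diag(m_1,…,m_N)) with eigenvalue ι, then the planar vector v_h = (v_1,0,v_2,0,…,v_N,0) satisfies (λI + M^{-1}B) v_h = ι·v_h, and its rotation v_h^⊥ = (0,v_1,0,v_2,…,0,v_N) satisfies (λI + M^{-1}B) v_h^⊥ = ((3λ − ι)/2)·v_h^⊥. -/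
open scoped BigOperators

/-- The Newtonian potential of `N` planar point masses. -/
noncomputable def newtonU (N : ℕ) (m : Fin N → ℝ)
    (r : EuclideanSpace ℝ (Fin N × Fin 2)) : ℝ :=
  ∑ p ∈ Finset.univ.filter (fun p : Fin N × Fin N => p.1 < p.2),
    m p.1 * m p.2 /
      Real.sqrt ((r (p.2, 0) - r (p.1, 0)) ^ 2 + (r (p.2, 1) - r (p.1, 1)) ^ 2)

namespace Stmt19Aux

variable {N : ℕ}

abbrev ES (N : ℕ) := EuclideanSpace ℝ (Fin N × Fin 2)

noncomputable abbrev pj (p : Fin N × Fin 2) : ES N →L[ℝ] ℝ := EuclideanSpace.proj p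

def P2 (N : ℕ) : Finset (Fin N × Fin N) :=
  Finset.univ.filter (fun pr : Fin N × Fin N => pr.1 < pr.2)

noncomputable def qf (a b : Fin N) (x : ES N) : ℝ :=
  (x (b, 0) - x (a, 0)) ^ 2 + (x (b, 1) - x (a, 1)) ^ 2

noncomputable def dq (a b : Fin N) (x : ES N) : ES N →L[ℝ] ℝ :=
  (2 * (x (b, 0) - x (a, 0))) • (pj (b, 0) - pj (a, 0))
    + (2 * (x (b, 1) - x (a, 1))) • (pj (b, 1) - pj (a, 1))

lemma hasFDerivAt_coord (a b : Fin N) (c : Fin 2) (x : ES N) :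
    HasFDerivAt (fun y : ES N => y (b, c) - y (a, c)) (pj (b, c) - pj (a, c)) x :=
  (pj (b, c)).hasFDerivAt.sub (pj (a, c)).hasFDerivAt

lemma hasFDerivAt_qf (a b : Fin N) (x : ES N) :
    HasFDerivAt (qf a b) (dq a b x) x := by
  have h0 := hasFDerivAt_coord a b 0 x
  have h1 := hasFDerivAt_coord a b 1 x
  have h := ((h0.mul h0).add (h1.mul h1) : HasFDerivAt _ _ x)
  have hq : qf a b = fun y : ES N =>
      (y (b, 0) - y (a, 0)) * (y (b, 0) - y (a, 0)) +
        (y (b, 1) - y (a, 1)) * (y (b, 1) - y (a, 1)) := by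
    funext y; simp [qf]; ring
  rw [hq]
  refine h.congr_fderiv ?_
  ext y
  simp [dq]
  ring

variable (m : Fin N → ℝ)

noncomputable def sg (q p : Fin N × Fin 2) : ℝ := if q = p then 1 else 0

lemma hasFDerivAt_invsqrt (a b : Fin N) (x : ES N) (hq : 0 < qf a b x) :
    HasFDerivAt (fun y : ES N => (Real.sqrt (qf a b y))⁻¹)
      ((-(1 / (2 * Real.sqrt (qf a b x))) / Real.sqrt (qf a b x) ^ 2) • dq a b x) x := by
  have hs : Real.sqrt (qf a b x) ≠ 0 := (Real.sqrt_pos.2 hq).ne'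
  exact ((Real.hasDerivAt_sqrt hq.ne').inv hs).comp_hasFDerivAt x (hasFDerivAt_qf a b x)

lemma hasFDerivAt_U (x : ES N) (hq : ∀ a b : Fin N, a ≠ b → 0 < qf a b x) :
    HasFDerivAt (newtonU N m)
      (∑ pr ∈ P2 N, (m pr.1 * m pr.2 *
        (-(1 / (2 * Real.sqrt (qf pr.1 pr.2 x))) / Real.sqrt (qf pr.1 pr.2 x) ^ 2)) •
          dq pr.1 pr.2 x) x := by
  have hU : newtonU N m = fun y : ES N =>
      ∑ pr ∈ P2 N, m pr.1 * m pr.2 * (Real.sqrt (qf pr.1 pr.2 y))⁻¹ := by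
    funext y
    exact Finset.sum_congr rfl fun pr _ => div_eq_mul_inv _ _
  rw [hU]
  refine HasFDerivAt.fun_sum fun pr hpr => ?_
  have hab : pr.1 ≠ pr.2 := by
    have := (Finset.mem_filter.1 hpr).2
    exact ne_of_lt this
  have := (hasFDerivAt_invsqrt pr.1 pr.2 x (hq _ _ hab)).const_mul (m pr.1 * m pr.2)
  refine this.congr_fderiv ?_
  rw [smul_smul]

noncomputable def G (m : Fin N → ℝ) (p : Fin N × Fin 2) (x : ES N) : ℝ :=
  ∑ pr ∈ P2 N, -(m pr.1 * m pr.2) *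
    ((x (pr.2, 0) - x (pr.1, 0)) * (sg (pr.2, 0) p - sg (pr.1, 0) p)
      + (x (pr.2, 1) - x (pr.1, 1)) * (sg (pr.2, 1) p - sg (pr.1, 1) p))
    * (Real.sqrt (qf pr.1 pr.2 x) ^ 3)⁻¹

lemma apply_eq_inner (v : ES N) (p : Fin N × Fin 2) :
    v p = @inner ℝ _ _ v (EuclideanSpace.single p (1:ℝ)) := by
  rw [EuclideanSpace.inner_single_right]; simp

lemma grad_eq (x : ES N) (hq : ∀ a b : Fin N, a ≠ b → 0 < qf a b x) (p : Fin N × Fin 2) :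
    gradient (newtonU N m) x p = G m p x := by
  have hfd := (hasFDerivAt_U m x hq).fderiv
  rw [gradient,
    apply_eq_inner ((InnerProductSpace.toDual ℝ (ES N)).symm (fderiv ℝ (newtonU N m) x)) p,
    InnerProductSpace.toDual_symm_apply, hfd]
  simp only [ContinuousLinearMap.sum_apply, ContinuousLinearMap.smul_apply, dq,
    ContinuousLinearMap.add_apply, ContinuousLinearMap.sub_apply, pj, PiLp.proj_apply,
    EuclideanSpace.single_apply, G, sg]
  refine Finset.sum_congr rfl fun pr hpr => ?_
  have hab : pr.1 ≠ pr.2 := ne_of_lt (Finset.mem_filter.1 hpr).2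
  have hpos := hq _ _ hab
  have hs : Real.sqrt (qf pr.1 pr.2 x) ≠ 0 := (Real.sqrt_pos.2 hpos).ne'
  have h3 : Real.sqrt (qf pr.1 pr.2 x) ^ 3 = Real.sqrt (qf pr.1 pr.2 x) * qf pr.1 pr.2 x := by
    rw [pow_succ, Real.sq_sqrt hpos.le, mul_comm]
  simp only [smul_eq_mul]
  rw [h3, Real.sq_sqrt hpos.le]
  field_simp

noncomputable def LG (m : Fin N → ℝ) (p : Fin N × Fin 2) (x : ES N) : ES N →L[ℝ] ℝ :=
  ∑ pr ∈ P2 N,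
    (((-(m pr.1 * m pr.2) *
        ((x (pr.2, 0) - x (pr.1, 0)) * (sg (pr.2, 0) p - sg (pr.1, 0) p)
          + (x (pr.2, 1) - x (pr.1, 1)) * (sg (pr.2, 1) p - sg (pr.1, 1) p)))
        * (-(3 / 2) * (Real.sqrt (qf pr.1 pr.2 x) ^ 5)⁻¹)) • dq pr.1 pr.2 x
    + ((Real.sqrt (qf pr.1 pr.2 x) ^ 3)⁻¹ * -(m pr.1 * m pr.2)) •
        ((sg (pr.2, 0) p - sg (pr.1, 0) p) • (pj (pr.2, 0) - pj (pr.1, 0))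
          + (sg (pr.2, 1) p - sg (pr.1, 1) p) • (pj (pr.2, 1) - pj (pr.1, 1))))

lemma hasFDerivAt_G (p : Fin N × Fin 2) (x : ES N)
    (hq : ∀ a b : Fin N, a ≠ b → 0 < qf a b x) :
    HasFDerivAt (G m p) (LG m p x) x := by
  rw [show G m p = fun y : ES N => ∑ pr ∈ P2 N, -(m pr.1 * m pr.2) *
    ((y (pr.2, 0) - y (pr.1, 0)) * (sg (pr.2, 0) p - sg (pr.1, 0) p)
      + (y (pr.2, 1) - y (pr.1, 1)) * (sg (pr.2, 1) p - sg (pr.1, 1) p))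
    * (Real.sqrt (qf pr.1 pr.2 y) ^ 3)⁻¹ from rfl]
  rw [LG]
  refine HasFDerivAt.fun_sum fun pr hpr => ?_
  have hab : pr.1 ≠ pr.2 := ne_of_lt (Finset.mem_filter.1 hpr).2
  have hpos := hq _ _ hab
  have hs : Real.sqrt (qf pr.1 pr.2 x) ≠ 0 := (Real.sqrt_pos.2 hpos).ne'
  have hS : HasFDerivAt (fun y : ES N =>
      ((y (pr.2, 0) - y (pr.1, 0)) * (sg (pr.2, 0) p - sg (pr.1, 0) p)
        + (y (pr.2, 1) - y (pr.1, 1)) * (sg (pr.2, 1) p - sg (pr.1, 1) p)))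
      ((sg (pr.2, 0) p - sg (pr.1, 0) p) • (pj (pr.2, 0) - pj (pr.1, 0))
        + (sg (pr.2, 1) p - sg (pr.1, 1) p) • (pj (pr.2, 1) - pj (pr.1, 1))) x := by
    have h0 := (hasFDerivAt_coord pr.1 pr.2 0 x).mul_const (sg (pr.2, 0) p - sg (pr.1, 0) p)
    have h1 := (hasFDerivAt_coord pr.1 pr.2 1 x).mul_const (sg (pr.2, 1) p - sg (pr.1, 1) p)
    exact h0.add h1
  have hu := hS.const_mul (-(m pr.1 * m pr.2))
  have hψ : HasFDerivAt (fun y : ES N => (Real.sqrt (qf pr.1 pr.2 y) ^ 3)⁻¹)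
      ((-(3 * Real.sqrt (qf pr.1 pr.2 x) ^ 2 * (1 / (2 * Real.sqrt (qf pr.1 pr.2 x))))
        / (Real.sqrt (qf pr.1 pr.2 x) ^ 3) ^ 2) • dq pr.1 pr.2 x) x := by
    have hinv := (((Real.hasDerivAt_sqrt hpos.ne').pow 3).inv (pow_ne_zero 3 hs))
    have := hinv.comp_hasFDerivAt x (hasFDerivAt_qf pr.1 pr.2 x)
    refine this.congr_fderiv ?_
    congr 1
  have hmul := hu.mul hψ
  refine hmul.congr_fderiv ?_
  ext y
  simp only [ContinuousLinearMap.add_apply, ContinuousLinearMap.smul_apply,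
    ContinuousLinearMap.coe_smul', Pi.smul_apply, smul_eq_mul]
  have hq2 : Real.sqrt (qf pr.1 pr.2 x) ^ 2 = qf pr.1 pr.2 x := Real.sq_sqrt hpos.le
  field_simp

noncomputable def W (m ξ : Fin N → ℝ) (j k : Fin N) : ℝ :=
  ∑ pr ∈ P2 N,
    -(m pr.1 * m pr.2 * ((if pr.2 = j then (1:ℝ) else 0) - (if pr.1 = j then 1 else 0))
        * ((if pr.2 = k then (1:ℝ) else 0) - (if pr.1 = k then 1 else 0)))
      / |ξ pr.2 - ξ pr.1| ^ 3

lemma LG_apply (ξ : Fin N → ℝ) (hξ : Function.Injective ξ) (r : ES N)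
    (hr : ∀ p : Fin N × Fin 2, r p = if p.2 = 0 then ξ p.1 else 0)
    (j k : Fin N) (i i' : Fin 2) :
    LG m (j, i) r (EuclideanSpace.single (k, i') 1)
      = (if i = i' then (if i = (0 : Fin 2) then (-2 : ℝ) else 1) else 0) * W m ξ j k := by
  rw [LG, W, Finset.mul_sum, ContinuousLinearMap.sum_apply]
  refine Finset.sum_congr rfl fun pr hpr => ?_
  have hab : pr.1 ≠ pr.2 := ne_of_lt (Finset.mem_filter.1 hpr).2
  have hd0 : ξ pr.2 - ξ pr.1 ≠ 0 := sub_ne_zero.2 fun h => hab (hξ h.symm)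
  have hqr : qf pr.1 pr.2 r = (ξ pr.2 - ξ pr.1) ^ 2 := by
    simp [qf, hr (pr.2, 0), hr (pr.1, 0), hr (pr.2, 1), hr (pr.1, 1)]
  have hsq : Real.sqrt (qf pr.1 pr.2 r) = |ξ pr.2 - ξ pr.1| := by
    rw [hqr, Real.sqrt_sq_eq_abs]
  have habs : |ξ pr.2 - ξ pr.1| ≠ 0 := abs_ne_zero.2 hd0
  have h2 : |ξ pr.2 - ξ pr.1| ^ 2 = (ξ pr.2 - ξ pr.1) ^ 2 := sq_abs _
  simp only [ContinuousLinearMap.add_apply, ContinuousLinearMap.smul_apply, dq,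
    ContinuousLinearMap.sub_apply, pj, PiLp.proj_apply, EuclideanSpace.single_apply,
    sg, hsq, hr (pr.2, 0), hr (pr.1, 0), hr (pr.2, 1), hr (pr.1, 1), smul_eq_mul]
  have h3 : |ξ pr.2 - ξ pr.1| ^ 3 = (ξ pr.2 - ξ pr.1) ^ 2 * |ξ pr.2 - ξ pr.1| := by
    rw [show |ξ pr.2 - ξ pr.1| ^ 3 = |ξ pr.2 - ξ pr.1| ^ 2 * |ξ pr.2 - ξ pr.1| from by ring, h2]
  have h5 : |ξ pr.2 - ξ pr.1| ^ 5
      = (ξ pr.2 - ξ pr.1) ^ 4 * |ξ pr.2 - ξ pr.1| := by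
    rw [show |ξ pr.2 - ξ pr.1| ^ 5 = (|ξ pr.2 - ξ pr.1| ^ 2) ^ 2 * |ξ pr.2 - ξ pr.1| from by
      ring, h2]; ring
  fin_cases i <;> fin_cases i' <;>
    simp only [Prod.mk.injEq, if_true, if_false, and_true, and_false,
      Fin.isValue, Fin.zero_eta, Fin.mk_one, show ((0 : Fin 2) = 1) = False from by simp [Fin.ext_iff],
      show ((1 : Fin 2) = 0) = False from by simp [Fin.ext_iff], ite_false, ite_true] <;>
  · rw [h3, h5]
    field_simp
    try ring

noncomputable def Gv (m : Fin N → ℝ) (x : ES N) : ES N :=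
  ∑ p : Fin N × Fin 2, G m p x • EuclideanSpace.single p 1

lemma Gv_apply (x : ES N) (p : Fin N × Fin 2) : Gv m x p = G m p x := by
  rw [show Gv m x p = pj p (Gv m x) from rfl, Gv, map_sum]
  rw [Finset.sum_eq_single p]
  · simp
  · intro q _ hq
    simp [Ne.symm hq]
  · intro h
    exact absurd (Finset.mem_univ p) h

lemma qf_cont (a b : Fin N) : Continuous (qf a b) := by
  have h : ∀ c : Fin 2, Continuous (fun x : ES N => x (b, c) - x (a, c)) :=
    fun c => ((pj (b, c)).continuous).sub ((pj (a, c)).continuous)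
  exact (((h 0).pow 2).add ((h 1).pow 2))

lemma eventually_pos (r : ES N) (hq : ∀ a b : Fin N, a ≠ b → 0 < qf a b r) :
    ∀ᶠ x in nhds r, ∀ a b : Fin N, a ≠ b → 0 < qf a b x := by
  rw [Filter.eventually_all]
  intro a
  rw [Filter.eventually_all]
  intro b
  by_cases hab : a = b
  · filter_upwards with x h
    exact absurd hab h
  · have hc : ContinuousAt (qf a b) r := (qf_cont a b).continuousAt
    filter_upwards [hc.eventually (eventually_gt_nhds (hq a b hab))] with x hx _
    exact hx

lemma qf_pos_at (ξ : Fin N → ℝ) (hξ : Function.Injective ξ) (r : ES N)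
    (hr : ∀ p : Fin N × Fin 2, r p = if p.2 = 0 then ξ p.1 else 0)
    (a b : Fin N) (hab : a ≠ b) : 0 < qf a b r := by
  have hd0 : ξ b - ξ a ≠ 0 := sub_ne_zero.2 fun h => hab (hξ h).symm
  have : qf a b r = (ξ b - ξ a) ^ 2 := by
    simp [qf, hr (b, 0), hr (a, 0), hr (b, 1), hr (a, 1)]
  rw [this]
  positivity

lemma hmaster (ξ : Fin N → ℝ) (hξ : Function.Injective ξ) (r : ES N)
    (hr : ∀ p : Fin N × Fin 2, r p = if p.2 = 0 then ξ p.1 else 0)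
    (j k : Fin N) (i i' : Fin 2) :
    fderiv ℝ (gradient (newtonU N m)) r (EuclideanSpace.single (k, i') 1) (j, i)
      = (if i = i' then (if i = (0 : Fin 2) then (-2 : ℝ) else 1) else 0) * W m ξ j k := by
  have hq : ∀ a b : Fin N, a ≠ b → 0 < qf a b r := qf_pos_at ξ hξ r hr
  have hev : gradient (newtonU N m) =ᶠ[nhds r] Gv m := by
    filter_upwards [eventually_pos r hq] with x hx
    ext p
    exact (grad_eq m x hx p).trans (Gv_apply m x p).symm
  have hGv : HasFDerivAt (Gv m)
      (∑ p : Fin N × Fin 2, (LG m p r).smulRight (EuclideanSpace.single p 1)) r := by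
    exact HasFDerivAt.fun_sum (fun p _ => (hasFDerivAt_G m p r hq).smul_const _)
  rw [hev.fderiv_eq, hGv.fderiv]
  rw [show (∑ p : Fin N × Fin 2, (LG m p r).smulRight (EuclideanSpace.single p 1))
        (EuclideanSpace.single (k, i') 1) ((j, i))
      = pj (j, i) ((∑ p : Fin N × Fin 2, (LG m p r).smulRight (EuclideanSpace.single p 1))
        (EuclideanSpace.single (k, i') 1)) from rfl]
  rw [ContinuousLinearMap.sum_apply, map_sum]
  rw [Finset.sum_eq_single ((j, i) : Fin N × Fin 2)]
  · rw [ContinuousLinearMap.smulRight_apply]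
    simp only [map_smul, pj, PiLp.proj_apply, EuclideanSpace.single_apply, if_pos rfl,
      smul_eq_mul, mul_one, if_true, ite_true]
    exact LG_apply m ξ hξ r hr j k i i'
  · intro q _ hqne
    rw [ContinuousLinearMap.smulRight_apply]
    simp [Ne.symm hqne]
  · intro h
    exact absurd (Finset.mem_univ _) h

lemma sgfac_zero (j k a b : Fin N) (hjk : j ≠ k) (h12 : a < b)
    (hne1 : (a, b) ≠ (j, k)) (hne2 : (a, b) ≠ (k, j)) :
    ((if b = j then (1:ℝ) else 0) - (if a = j then 1 else 0)) *
      ((if b = k then (1:ℝ) else 0) - (if a = k then 1 else 0)) = 0 := by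
  by_cases h1j : a = j <;> by_cases h2j : b = j <;>
    by_cases h1k : a = k <;> by_cases h2k : b = k <;>
    simp_all [Prod.ext_iff] <;> try ring

lemma W_offdiag (ξ : Fin N → ℝ) (j k : Fin N) (hjk : j ≠ k) :
    W m ξ j k = m j * m k / |ξ k - ξ j| ^ 3 := by
  have hzero : ∀ q ∈ P2 N, q ≠ ((j, k) : Fin N × Fin N) → q ≠ (k, j) →
      -(m q.1 * m q.2 * ((if q.2 = j then (1:ℝ) else 0) - (if q.1 = j then 1 else 0))
        * ((if q.2 = k then (1:ℝ) else 0) - (if q.1 = k then 1 else 0)))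
      / |ξ q.2 - ξ q.1| ^ 3 = 0 := by
    intro q hq hne1 hne2
    obtain ⟨a, b⟩ := q
    have h12 : a < b := (Finset.mem_filter.1 hq).2
    have hs := sgfac_zero j k a b hjk h12 hne1 hne2
    rw [div_eq_zero_iff]
    left
    linear_combination (-(m a * m b)) * hs
  rcases hjk.lt_or_gt with hlt | hlt
  · rw [W, Finset.sum_eq_single ((j, k) : Fin N × Fin N)]
    · simp [hjk, Ne.symm hjk]
    · intro q hq hne
      refine hzero q hq hne ?_
      rintro rfl
      exact absurd hlt (lt_asymm (Finset.mem_filter.1 hq).2)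
    · intro h
      exact absurd (show ((j, k) : Fin N × Fin N) ∈ P2 N from
        Finset.mem_filter.2 ⟨Finset.mem_univ _, hlt⟩) h
  · rw [W, Finset.sum_eq_single ((k, j) : Fin N × Fin N)]
    · simp [hjk, Ne.symm hjk]
      rw [abs_sub_comm]
      ring
    · intro q hq hne
      refine hzero q hq ?_ hne
      rintro rfl
      exact absurd hlt (lt_asymm (Finset.mem_filter.1 hq).2)
    · intro h
      exact absurd (show ((k, j) : Fin N × Fin N) ∈ P2 N from
        Finset.mem_filter.2 ⟨Finset.mem_univ _, hlt⟩) h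

end Stmt19Aux

/-- At a collinear central configuration `r = (ξ₁,0,…,ξ_N,0)` with multiplier `λ`:
the off-diagonal `2×2` blocks of the Hessian `B` of the planar potential are
`(m_j m_k / r_{jk}³)·diag(-2,1)`; moreover any eigenvector `v` (eigenvalue `ι`) of
the collinear operator `λ I + M₁⁻¹ B₁` lifts horizontally to an eigenvector of
`λ I + M⁻¹ B` with eigenvalue `ι`, and its rotation is an eigenvector with
eigenvalue `(3λ - ι)/2`. -/
theorem stmt19 (N : ℕ) (hN : 2 ≤ N) (m : Fin N → ℝ) (hm : ∀ k, 0 < m k)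
    (ξ : Fin N → ℝ) (hξ : Function.Injective ξ)
    (r : EuclideanSpace ℝ (Fin N × Fin 2))
    (hr : ∀ p : Fin N × Fin 2, r p = if p.2 = 0 then ξ p.1 else 0)
    (lam : ℝ)
    (hgrad : ∀ p : Fin N × Fin 2, gradient (newtonU N m) r p = -lam * (m p.1 * r p))
    (B : EuclideanSpace ℝ (Fin N × Fin 2) →L[ℝ] EuclideanSpace ℝ (Fin N × Fin 2))
    (hB : B = fderiv ℝ (gradient (newtonU N m)) r) :
    (∀ j k : Fin N, j ≠ k → ∀ i i' : Fin 2,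
      B (EuclideanSpace.single (k, i') 1) (j, i)
        = m j * m k / |ξ k - ξ j| ^ 3 *
            (if i = i' then (if i = 0 then -2 else 1) else 0)) ∧
    (∀ (v : Fin N → ℝ) (ι : ℝ),
      (∀ j : Fin N, lam * v j + (m j)⁻¹ *
          (∑ k : Fin N, B (EuclideanSpace.single (k, (0 : Fin 2)) 1) (j, 0) * v k)
        = ι * v j) →
      ∀ (vh vperp : EuclideanSpace ℝ (Fin N × Fin 2)),
        (∀ p : Fin N × Fin 2, vh p = if p.2 = 0 then v p.1 else 0) →
        (∀ p : Fin N × Fin 2, vperp p = if p.2 = 1 then v p.1 else 0) →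
        (∀ p : Fin N × Fin 2,
          lam * vh p + (m p.1)⁻¹ * B vh p = ι * vh p) ∧
        (∀ p : Fin N × Fin 2,
          lam * vperp p + (m p.1)⁻¹ * B vperp p = (3 * lam - ι) / 2 * vperp p)) := by
  have hM : ∀ (j k : Fin N) (i i' : Fin 2),
      B (EuclideanSpace.single (k, i') 1) (j, i)
        = (if i = i' then (if i = (0 : Fin 2) then (-2 : ℝ) else 1) else 0) * Stmt19Aux.W m ξ j k := by
    intro j k i i'
    rw [hB]
    exact Stmt19Aux.hmaster m ξ hξ r hr j k i i'
  constructor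
  · intro j k hjk i i'
    rw [hM j k i i', Stmt19Aux.W_offdiag m ξ j k hjk]
    ring
  · intro v ι hyp vh vperp hvh hvperp
    -- decomposition of vh and vperp
    have hdec : ∀ (c : Fin 2) (w : EuclideanSpace ℝ (Fin N × Fin 2)),
        (∀ p : Fin N × Fin 2, w p = if p.2 = c then v p.1 else 0) →
        w = ∑ k : Fin N, v k • EuclideanSpace.single ((k, c) : Fin N × Fin 2) (1 : ℝ) := by
      intro c w hw
      ext p
      rw [show (∑ k : Fin N, v k • EuclideanSpace.single ((k, c) : Fin N × Fin 2) (1:ℝ)) p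
          = Stmt19Aux.pj p (∑ k : Fin N, v k • EuclideanSpace.single ((k, c) : Fin N × Fin 2) (1:ℝ))
          from rfl, map_sum]
      obtain ⟨a, d⟩ := p
      rw [hw (a, d)]
      simp only [map_smul, Stmt19Aux.pj, PiLp.proj_apply, EuclideanSpace.single_apply, smul_eq_mul,
        Prod.mk.injEq]
      by_cases hd : d = c
      · subst hd
        simp only [and_true, mul_ite, mul_one, mul_zero, if_pos rfl, ite_true]
        rw [Finset.sum_ite_eq]
        simp
      · simp [hd]
    have hBap : ∀ (c : Fin 2) (w : EuclideanSpace ℝ (Fin N × Fin 2)),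
        (∀ p : Fin N × Fin 2, w p = if p.2 = c then v p.1 else 0) →
        ∀ p : Fin N × Fin 2, B w p
          = ∑ k : Fin N, v k * B (EuclideanSpace.single ((k, c) : Fin N × Fin 2) 1) p := by
      intro c w hw p
      rw [hdec c w hw, map_sum]
      rw [show (∑ k : Fin N, B (v k • EuclideanSpace.single ((k, c) : Fin N × Fin 2) (1:ℝ))) p
          = Stmt19Aux.pj p (∑ k : Fin N, B (v k • EuclideanSpace.single ((k, c) : Fin N × Fin 2) (1:ℝ)))
          from rfl, map_sum]
      refine Finset.sum_congr rfl fun k _ => ?_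
      rw [map_smul]
      simp [Stmt19Aux.pj]
    constructor
    · intro p
      obtain ⟨j, i⟩ := p
      rw [hBap 0 vh hvh (j, i), hvh (j, i)]
      have hio : i = 0 ∨ i = 1 := by fin_cases i <;> decide
      rcases hio with rfl | rfl
      · simp only [Fin.isValue, if_pos rfl, ite_true]
        have hc : ∑ k : Fin N, v k * B (EuclideanSpace.single ((k, (0:Fin 2))) 1) (j, 0)
            = ∑ k : Fin N, B (EuclideanSpace.single ((k, (0:Fin 2))) 1) (j, 0) * v k :=
          Finset.sum_congr rfl fun k _ => mul_comm _ _
        rw [hc]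
        exact hyp j
      · have hz : ∀ k : Fin N,
            B (EuclideanSpace.single ((k, (0:Fin 2))) 1) (j, 1) = 0 := by
          intro k
          rw [hM j k 1 0]
          norm_num
        simp [hz]
    · intro p
      obtain ⟨j, i⟩ := p
      rw [hBap 1 vperp hvperp (j, i), hvperp (j, i)]
      have hio : i = 0 ∨ i = 1 := by fin_cases i <;> decide
      rcases hio with rfl | rfl
      · have hz : ∀ k : Fin N,
            B (EuclideanSpace.single ((k, (1:Fin 2))) 1) (j, 0) = 0 := by
          intro k
          rw [hM j k 0 1]
          norm_num
        simp [hz]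
      · simp only [Fin.isValue, if_pos rfl, ite_true]
        have h1 : ∑ k : Fin N, v k * B (EuclideanSpace.single ((k, (1:Fin 2))) 1) (j, 1)
            = ∑ k : Fin N, Stmt19Aux.W m ξ j k * v k := by
          refine Finset.sum_congr rfl fun k _ => ?_
          rw [hM j k 1 1]
          norm_num
          ring
        have h2 : ∑ k : Fin N, B (EuclideanSpace.single ((k, (0:Fin 2))) 1) (j, 0) * v k
            = (-2) * ∑ k : Fin N, Stmt19Aux.W m ξ j k * v k := by
          rw [Finset.mul_sum]
          refine Finset.sum_congr rfl fun k _ => ?_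
          rw [hM j k 0 0]
          norm_num
          ring
        have hyp' := hyp j
        rw [h2] at hyp'
        rw [h1]
        linear_combination -hyp' / 2
end
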